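/- In ℂ[x₁,x₂,x₃,x₄] set ε₁ = ∑ᵢ xᵢ², ε₂ = ∑_{i<j} xᵢ²xⱼ², ε₃ = ∑_{i<j<k} xᵢ²xⱼ²xₖ², ε₄ = x₁²x₂²x₃²x₄², and define the F₄ basic invariants y₁ = 288ε₂ε₄ − 108ε₁²ε₄ − 8ε₂³ + 3ε₁²ε₂², y₂ = 12ε₄ − 3ε₁ε₃ + ε₂², y₃ = 6ε₃ − ε₁ε₂, y₄ = ε₁. Then the symmetric 4×4 matrix with entries g^{ij} := ∑_{a=1}^{4} (∂yᵢ/∂xₐ)(∂yⱼ/∂xₐ) satisfies, as identities of polynomials: g^{11} = 1152y₂²y₃ − 144y₁y₂y₄ + 1152y₂y₃²y₄ − 144y₁y₃y₄² + 288y₃³y₄², g^{12} = −96y₂²y₄ − 48y₂y₃y₄², g^{22} = −8y₂y₃ − y₁y₄ + 3y₃²y₄, g^{13} = 192y₂² + 120y₂y₃y₄ − 12y₁y₄² + 12y₃²y₄², g^{23} = 2y₁ − 6y₃² − 8y₂y₄², g^{33} = 20y₂y₄ − 4y₃y₄², g^{14} = 24y₁, g^{24} = 16y₂, g^{34} = 12y₃,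 g^{44} = 4y₄. -/
import Mathlib

open MvPolynomial

noncomputable section

/-! The elementary symmetric polynomials of `x₁², …, x₄²` and the `F₄` basic invariants. -/

def e₁F4 : MvPolynomial (Fin 4) ℂ := X 0 ^ 2 + X 1 ^ 2 + X 2 ^ 2 + X 3 ^ 2
def e₂F4 : MvPolynomial (Fin 4) ℂ :=
  X 0 ^ 2 * X 1 ^ 2 + X 0 ^ 2 * X 2 ^ 2 + X 0 ^ 2 * X 3 ^ 2
    + X 1 ^ 2 * X 2 ^ 2 + X 1 ^ 2 * X 3 ^ 2 + X 2 ^ 2 * X 3 ^ 2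
def e₃F4 : MvPolynomial (Fin 4) ℂ :=
  X 0 ^ 2 * X 1 ^ 2 * X 2 ^ 2 + X 0 ^ 2 * X 1 ^ 2 * X 3 ^ 2
    + X 0 ^ 2 * X 2 ^ 2 * X 3 ^ 2 + X 1 ^ 2 * X 2 ^ 2 * X 3 ^ 2
def e₄F4 : MvPolynomial (Fin 4) ℂ := X 0 ^ 2 * X 1 ^ 2 * X 2 ^ 2 * X 3 ^ 2

/-- The `F₄` basic invariant of degree 12. -/
def y₁F4 : MvPolynomial (Fin 4) ℂ :=
  288 * e₂F4 * e₄F4 - 108 * e₁F4 ^ 2 * e₄F4 - 8 * e₂F4 ^ 3 + 3 * e₁F4 ^ 2 * e₂F4 ^ 2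

/-- The `F₄` basic invariant of degree 8. -/
def y₂F4 : MvPolynomial (Fin 4) ℂ := 12 * e₄F4 - 3 * e₁F4 * e₃F4 + e₂F4 ^ 2

/-- The `F₄` basic invariant of degree 6. -/
def y₃F4 : MvPolynomial (Fin 4) ℂ := 6 * e₃F4 - e₁F4 * e₂F4

/-- The `F₄` basic invariant of degree 2. -/
def y₄F4 : MvPolynomial (Fin 4) ℂ := e₁F4


lemma pderiv_ofNat' (i : Fin 4) (n : ℕ) [n.AtLeastTwo] :
    pderiv i (no_index (OfNat.ofNat n) : MvPolynomial (Fin 4) ℂ) = 0 := by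
  rw [← map_ofNat (C : ℂ →+* MvPolynomial (Fin 4) ℂ) n, pderiv_C]

lemma de10 : pderiv 0 e₁F4 = 2 * X 0 := by
  simp [e₁F4, pderiv_X, Pi.single_apply] <;> ring

lemma de11 : pderiv 1 e₁F4 = 2 * X 1 := by
  simp [e₁F4, pderiv_X, Pi.single_apply] <;> ring

lemma de12 : pderiv 2 e₁F4 = 2 * X 2 := by
  simp [e₁F4, pderiv_X, Pi.single_apply] <;> ring

lemma de13 : pderiv 3 e₁F4 = 2 * X 3 := by
  simp [e₁F4, pderiv_X, Pi.single_apply] <;> ring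

lemma de20 : pderiv 0 e₂F4 = 2 * X 0 * (X 1 ^ 2 + X 2 ^ 2 + X 3 ^ 2) := by
  simp [e₂F4, pderiv_X, Pi.single_apply] <;> ring

lemma de21 : pderiv 1 e₂F4 = 2 * X 1 * (X 0 ^ 2 + X 2 ^ 2 + X 3 ^ 2) := by
  simp [e₂F4, pderiv_X, Pi.single_apply] <;> ring

lemma de22 : pderiv 2 e₂F4 = 2 * X 2 * (X 0 ^ 2 + X 1 ^ 2 + X 3 ^ 2) := by
  simp [e₂F4, pderiv_X, Pi.single_apply] <;> ring

lemma de23 : pderiv 3 e₂F4 = 2 * X 3 * (X 0 ^ 2 + X 1 ^ 2 + X 2 ^ 2) := by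
  simp [e₂F4, pderiv_X, Pi.single_apply] <;> ring

lemma de30 : pderiv 0 e₃F4 = 2 * X 0 * (X 1 ^ 2 * X 2 ^ 2 + X 1 ^ 2 * X 3 ^ 2 + X 2 ^ 2 * X 3 ^ 2) := by
  simp [e₃F4, pderiv_X, Pi.single_apply] <;> ring

lemma de31 : pderiv 1 e₃F4 = 2 * X 1 * (X 0 ^ 2 * X 2 ^ 2 + X 0 ^ 2 * X 3 ^ 2 + X 2 ^ 2 * X 3 ^ 2) := by
  simp [e₃F4, pderiv_X, Pi.single_apply] <;> ring

lemma de32 : pderiv 2 e₃F4 = 2 * X 2 * (X 0 ^ 2 * X 1 ^ 2 + X 0 ^ 2 * X 3 ^ 2 + X 1 ^ 2 * X 3 ^ 2) := by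
  simp [e₃F4, pderiv_X, Pi.single_apply] <;> ring

lemma de33 : pderiv 3 e₃F4 = 2 * X 3 * (X 0 ^ 2 * X 1 ^ 2 + X 0 ^ 2 * X 2 ^ 2 + X 1 ^ 2 * X 2 ^ 2) := by
  simp [e₃F4, pderiv_X, Pi.single_apply] <;> ring

lemma de40 : pderiv 0 e₄F4 = 2 * X 0 * (X 1 ^ 2 * X 2 ^ 2 * X 3 ^ 2) := by
  simp [e₄F4, pderiv_X, Pi.single_apply] <;> ring

lemma de41 : pderiv 1 e₄F4 = 2 * X 1 * (X 0 ^ 2 * X 2 ^ 2 * X 3 ^ 2) := by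
  simp [e₄F4, pderiv_X, Pi.single_apply] <;> ring

lemma de42 : pderiv 2 e₄F4 = 2 * X 2 * (X 0 ^ 2 * X 1 ^ 2 * X 3 ^ 2) := by
  simp [e₄F4, pderiv_X, Pi.single_apply] <;> ring

lemma de43 : pderiv 3 e₄F4 = 2 * X 3 * (X 0 ^ 2 * X 1 ^ 2 * X 2 ^ 2) := by
  simp [e₄F4, pderiv_X, Pi.single_apply] <;> ring

lemma dy10 : pderiv 0 y₁F4 = 288 * ((2 * X 0 * (X 1 ^ 2 + X 2 ^ 2 + X 3 ^ 2)) * e₄F4 + e₂F4 * (2 * X 0 * (X 1 ^ 2 * X 2 ^ 2 * X 3 ^ 2))) - 108 * (2 * e₁F4 * (2 * X 0) * e₄F4 + e₁F4 ^ 2 * (2 * X 0 * (X 1 ^ 2 * X 2 ^ 2 * X 3 ^ 2))) - 24 * e₂F4 ^ 2 * (2 * X 0 * (X 1 ^ 2 + X 2 ^ 2 + X 3 ^ 2)) + 6 * e₁F4 * (2 * X 0) * e₂F4 ^ 2 + 6 * e₁F4 ^ 2 * e₂F4 * (2 * X 0 * (X 1 ^ 2 + X 2 ^ 2 + X 3 ^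 2)) := by
  simp only [y₁F4, map_add, map_sub, pderiv_mul, pderiv_pow, pderiv_ofNat', de10, de11, de12, de13, de20, de21, de22, de23, de30, de31, de32, de33, de40, de41, de42, de43]
  ring

lemma dy11 : pderiv 1 y₁F4 = 288 * ((2 * X 1 * (X 0 ^ 2 + X 2 ^ 2 + X 3 ^ 2)) * e₄F4 + e₂F4 * (2 * X 1 * (X 0 ^ 2 * X 2 ^ 2 * X 3 ^ 2))) - 108 * (2 * e₁F4 * (2 * X 1) * e₄F4 + e₁F4 ^ 2 * (2 * X 1 * (X 0 ^ 2 * X 2 ^ 2 * X 3 ^ 2))) - 24 * e₂F4 ^ 2 * (2 * X 1 * (X 0 ^ 2 + X 2 ^ 2 + X 3 ^ 2)) + 6 * e₁F4 * (2 * X 1) * e₂F4 ^ 2 + 6 * e₁F4 ^ 2 * e₂F4 * (2 * X 1 * (X 0 ^ 2 + X 2 ^ 2 + X 3 ^ 2)) := by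
  simp only [y₁F4, map_add, map_sub, pderiv_mul, pderiv_pow, pderiv_ofNat', de10, de11, de12, de13, de20, de21, de22, de23, de30, de31, de32, de33, de40, de41, de42, de43]
  ring

lemma dy12 : pderiv 2 y₁F4 = 288 * ((2 * X 2 * (X 0 ^ 2 + X 1 ^ 2 + X 3 ^ 2)) * e₄F4 + e₂F4 * (2 * X 2 * (X 0 ^ 2 * X 1 ^ 2 * X 3 ^ 2))) - 108 * (2 * e₁F4 * (2 * X 2) * e₄F4 + e₁F4 ^ 2 * (2 * X 2 * (X 0 ^ 2 * X 1 ^ 2 * X 3 ^ 2))) - 24 * e₂F4 ^ 2 * (2 * X 2 * (X 0 ^ 2 + X 1 ^ 2 + X 3 ^ 2)) + 6 * e₁F4 * (2 * X 2) * e₂F4 ^ 2 + 6 * e₁F4 ^ 2 * e₂F4 * (2 * X 2 * (X 0 ^ 2 + X 1 ^ 2 + X 3 ^ 2)) := by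
  simp only [y₁F4, map_add, map_sub, pderiv_mul, pderiv_pow, pderiv_ofNat', de10, de11, de12, de13, de20, de21, de22, de23, de30, de31, de32, de33, de40, de41, de42, de43]
  ring

lemma dy13 : pderiv 3 y₁F4 = 288 * ((2 * X 3 * (X 0 ^ 2 + X 1 ^ 2 + X 2 ^ 2)) * e₄F4 + e₂F4 * (2 * X 3 * (X 0 ^ 2 * X 1 ^ 2 * X 2 ^ 2))) - 108 * (2 * e₁F4 * (2 * X 3) * e₄F4 + e₁F4 ^ 2 * (2 * X 3 * (X 0 ^ 2 * X 1 ^ 2 * X 2 ^ 2))) - 24 * e₂F4 ^ 2 * (2 * X 3 * (X 0 ^ 2 + X 1 ^ 2 + X 2 ^ 2)) + 6 * e₁F4 * (2 * X 3) * e₂F4 ^ 2 + 6 * e₁F4 ^ 2 * e₂F4 * (2 * X 3 * (X 0 ^ 2 + X 1 ^ 2 + X 2 ^ 2)) := by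
  simp only [y₁F4, map_add, map_sub, pderiv_mul, pderiv_pow, pderiv_ofNat', de10, de11, de12, de13, de20, de21, de22, de23, de30, de31, de32, de33, de40, de41, de42, de43]
  ring

lemma dy20 : pderiv 0 y₂F4 = 12 * (2 * X 0 * (X 1 ^ 2 * X 2 ^ 2 * X 3 ^ 2)) - 3 * ((2 * X 0) * e₃F4 + e₁F4 * (2 * X 0 * (X 1 ^ 2 * X 2 ^ 2 + X 1 ^ 2 * X 3 ^ 2 + X 2 ^ 2 * X 3 ^ 2))) + 2 * e₂F4 * (2 * X 0 * (X 1 ^ 2 + X 2 ^ 2 + X 3 ^ 2)) := by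
  simp only [y₂F4, map_add, map_sub, pderiv_mul, pderiv_pow, pderiv_ofNat', de10, de11, de12, de13, de20, de21, de22, de23, de30, de31, de32, de33, de40, de41, de42, de43]
  ring

lemma dy21 : pderiv 1 y₂F4 = 12 * (2 * X 1 * (X 0 ^ 2 * X 2 ^ 2 * X 3 ^ 2)) - 3 * ((2 * X 1) * e₃F4 + e₁F4 * (2 * X 1 * (X 0 ^ 2 * X 2 ^ 2 + X 0 ^ 2 * X 3 ^ 2 + X 2 ^ 2 * X 3 ^ 2))) + 2 * e₂F4 * (2 * X 1 * (X 0 ^ 2 + X 2 ^ 2 + X 3 ^ 2)) := by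
  simp only [y₂F4, map_add, map_sub, pderiv_mul, pderiv_pow, pderiv_ofNat', de10, de11, de12, de13, de20, de21, de22, de23, de30, de31, de32, de33, de40, de41, de42, de43]
  ring

lemma dy22 : pderiv 2 y₂F4 = 12 * (2 * X 2 * (X 0 ^ 2 * X 1 ^ 2 * X 3 ^ 2)) - 3 * ((2 * X 2) * e₃F4 + e₁F4 * (2 * X 2 * (X 0 ^ 2 * X 1 ^ 2 + X 0 ^ 2 * X 3 ^ 2 + X 1 ^ 2 * X 3 ^ 2))) + 2 * e₂F4 * (2 * X 2 * (X 0 ^ 2 + X 1 ^ 2 + X 3 ^ 2)) := by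
  simp only [y₂F4, map_add, map_sub, pderiv_mul, pderiv_pow, pderiv_ofNat', de10, de11, de12, de13, de20, de21, de22, de23, de30, de31, de32, de33, de40, de41, de42, de43]
  ring

lemma dy23 : pderiv 3 y₂F4 = 12 * (2 * X 3 * (X 0 ^ 2 * X 1 ^ 2 * X 2 ^ 2)) - 3 * ((2 * X 3) * e₃F4 + e₁F4 * (2 * X 3 * (X 0 ^ 2 * X 1 ^ 2 + X 0 ^ 2 * X 2 ^ 2 + X 1 ^ 2 * X 2 ^ 2))) + 2 * e₂F4 * (2 * X 3 * (X 0 ^ 2 + X 1 ^ 2 + X 2 ^ 2)) := by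
  simp only [y₂F4, map_add, map_sub, pderiv_mul, pderiv_pow, pderiv_ofNat', de10, de11, de12, de13, de20, de21, de22, de23, de30, de31, de32, de33, de40, de41, de42, de43]
  ring

lemma dy30 : pderiv 0 y₃F4 = 6 * (2 * X 0 * (X 1 ^ 2 * X 2 ^ 2 + X 1 ^ 2 * X 3 ^ 2 + X 2 ^ 2 * X 3 ^ 2)) - ((2 * X 0) * e₂F4 + e₁F4 * (2 * X 0 * (X 1 ^ 2 + X 2 ^ 2 + X 3 ^ 2))) := by
  simp only [y₃F4, map_add, map_sub, pderiv_mul, pderiv_pow, pderiv_ofNat', de10, de11, de12, de13, de20, de21, de22, de23, de30, de31, de32, de33, de40, de41, de42, de43]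
  ring

lemma dy31 : pderiv 1 y₃F4 = 6 * (2 * X 1 * (X 0 ^ 2 * X 2 ^ 2 + X 0 ^ 2 * X 3 ^ 2 + X 2 ^ 2 * X 3 ^ 2)) - ((2 * X 1) * e₂F4 + e₁F4 * (2 * X 1 * (X 0 ^ 2 + X 2 ^ 2 + X 3 ^ 2))) := by
  simp only [y₃F4, map_add, map_sub, pderiv_mul, pderiv_pow, pderiv_ofNat', de10, de11, de12, de13, de20, de21, de22, de23, de30, de31, de32, de33, de40, de41, de42, de43]
  ring

lemma dy32 : pderiv 2 y₃F4 = 6 * (2 * X 2 * (X 0 ^ 2 * X 1 ^ 2 + X 0 ^ 2 * X 3 ^ 2 + X 1 ^ 2 * X 3 ^ 2)) - ((2 * X 2) * e₂F4 + e₁F4 * (2 * X 2 * (X 0 ^ 2 + X 1 ^ 2 + X 3 ^ 2))) := by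
  simp only [y₃F4, map_add, map_sub, pderiv_mul, pderiv_pow, pderiv_ofNat', de10, de11, de12, de13, de20, de21, de22, de23, de30, de31, de32, de33, de40, de41, de42, de43]
  ring

lemma dy33 : pderiv 3 y₃F4 = 6 * (2 * X 3 * (X 0 ^ 2 * X 1 ^ 2 + X 0 ^ 2 * X 2 ^ 2 + X 1 ^ 2 * X 2 ^ 2)) - ((2 * X 3) * e₂F4 + e₁F4 * (2 * X 3 * (X 0 ^ 2 + X 1 ^ 2 + X 2 ^ 2))) := by
  simp only [y₃F4, map_add, map_sub, pderiv_mul, pderiv_pow, pderiv_ofNat', de10, de11, de12, de13, de20, de21, de22, de23, de30, de31, de32, de33, de40, de41, de42, de43]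
  ring

lemma dy40 : pderiv 0 y₄F4 = 2 * X 0 := de10

lemma dy41 : pderiv 1 y₄F4 = 2 * X 1 := de11

lemma dy42 : pderiv 2 y₄F4 = 2 * X 2 := de12

lemma dy43 : pderiv 3 y₄F4 = 2 * X 3 := de13

set_option maxHeartbeats 4000000 in
lemma g11 : (∑ a, pderiv a y₁F4 * pderiv a y₁F4) = 1152 * y₂F4 ^ 2 * y₃F4 - 144 * y₁F4 * y₂F4 * y₄F4 + 1152 * y₂F4 * y₃F4 ^ 2 * y₄F4 - 144 * y₁F4 * y₃F4 * y₄F4 ^ 2 + 288 * y₃F4 ^ 3 * y₄F4 ^ 2 := by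
  rw [Fin.sum_univ_four, dy10, dy11, dy12, dy13]
  simp only [y₁F4, y₂F4, y₃F4, y₄F4, e₁F4, e₂F4, e₃F4, e₄F4]
  ring

set_option maxHeartbeats 4000000 in
lemma g12 : (∑ a, pderiv a y₁F4 * pderiv a y₂F4) = -96 * y₂F4 ^ 2 * y₄F4 - 48 * y₂F4 * y₃F4 * y₄F4 ^ 2 := by
  rw [Fin.sum_univ_four, dy10, dy11, dy12, dy13, dy20, dy21, dy22, dy23]
  simp only [y₁F4, y₂F4, y₃F4, y₄F4, e₁F4, e₂F4, e₃F4, e₄F4]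
  ring

set_option maxHeartbeats 4000000 in
lemma g22 : (∑ a, pderiv a y₂F4 * pderiv a y₂F4) = -8 * y₂F4 * y₃F4 - y₁F4 * y₄F4 + 3 * y₃F4 ^ 2 * y₄F4 := by
  rw [Fin.sum_univ_four, dy20, dy21, dy22, dy23]
  simp only [y₁F4, y₂F4, y₃F4, y₄F4, e₁F4, e₂F4, e₃F4, e₄F4]
  ring

set_option maxHeartbeats 4000000 in
lemma g13 : (∑ a, pderiv a y₁F4 * pderiv a y₃F4) = 192 * y₂F4 ^ 2 + 120 * y₂F4 * y₃F4 * y₄F4 - 12 * y₁F4 * y₄F4 ^ 2 + 12 * y₃F4 ^ 2 * y₄F4 ^ 2 := by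
  rw [Fin.sum_univ_four, dy10, dy11, dy12, dy13, dy30, dy31, dy32, dy33]
  simp only [y₁F4, y₂F4, y₃F4, y₄F4, e₁F4, e₂F4, e₃F4, e₄F4]
  ring

set_option maxHeartbeats 4000000 in
lemma g23 : (∑ a, pderiv a y₂F4 * pderiv a y₃F4) = 2 * y₁F4 - 6 * y₃F4 ^ 2 - 8 * y₂F4 * y₄F4 ^ 2 := by
  rw [Fin.sum_univ_four, dy20, dy21, dy22, dy23, dy30, dy31, dy32, dy33]
  simp only [y₁F4, y₂F4, y₃F4, y₄F4, e₁F4, e₂F4, e₃F4, e₄F4]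
  ring

set_option maxHeartbeats 4000000 in
lemma g33 : (∑ a, pderiv a y₃F4 * pderiv a y₃F4) = 20 * y₂F4 * y₄F4 - 4 * y₃F4 * y₄F4 ^ 2 := by
  rw [Fin.sum_univ_four, dy30, dy31, dy32, dy33]
  simp only [y₁F4, y₂F4, y₃F4, y₄F4, e₁F4, e₂F4, e₃F4, e₄F4]
  ring

set_option maxHeartbeats 4000000 in
lemma g14 : (∑ a, pderiv a y₁F4 * pderiv a y₄F4) = 24 * y₁F4 := by
  rw [Fin.sum_univ_four, dy10, dy11, dy12, dy13, dy40, dy41, dy42, dy43]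
  simp only [y₁F4, y₂F4, y₃F4, y₄F4, e₁F4, e₂F4, e₃F4, e₄F4]
  ring

set_option maxHeartbeats 4000000 in
lemma g24 : (∑ a, pderiv a y₂F4 * pderiv a y₄F4) = 16 * y₂F4 := by
  rw [Fin.sum_univ_four, dy20, dy21, dy22, dy23, dy40, dy41, dy42, dy43]
  simp only [y₁F4, y₂F4, y₃F4, y₄F4, e₁F4, e₂F4, e₃F4, e₄F4]
  ring

set_option maxHeartbeats 4000000 in
lemma g34 : (∑ a, pderiv a y₃F4 * pderiv a y₄F4) = 12 * y₃F4 := by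
  rw [Fin.sum_univ_four, dy30, dy31, dy32, dy33, dy40, dy41, dy42, dy43]
  simp only [y₁F4, y₂F4, y₃F4, y₄F4, e₁F4, e₂F4, e₃F4, e₄F4]
  ring

set_option maxHeartbeats 4000000 in
lemma g44 : (∑ a, pderiv a y₄F4 * pderiv a y₄F4) = 4 * y₄F4 := by
  rw [Fin.sum_univ_four, dy40, dy41, dy42, dy43]
  simp only [y₁F4, y₂F4, y₃F4, y₄F4, e₁F4, e₂F4, e₃F4, e₄F4]
  ring

/-- The intersection form `g^{ij} = (∇yᵢ, ∇yⱼ)` of `F₄` in the basic invariants. -/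
theorem statement_15 :
    (∑ a, pderiv a y₁F4 * pderiv a y₁F4)
      = 1152 * y₂F4 ^ 2 * y₃F4 - 144 * y₁F4 * y₂F4 * y₄F4 + 1152 * y₂F4 * y₃F4 ^ 2 * y₄F4
        - 144 * y₁F4 * y₃F4 * y₄F4 ^ 2 + 288 * y₃F4 ^ 3 * y₄F4 ^ 2 ∧
    (∑ a, pderiv a y₁F4 * pderiv a y₂F4)
      = -96 * y₂F4 ^ 2 * y₄F4 - 48 * y₂F4 * y₃F4 * y₄F4 ^ 2 ∧
    (∑ a, pderiv a y₂F4 * pderiv a y₂F4)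
      = -8 * y₂F4 * y₃F4 - y₁F4 * y₄F4 + 3 * y₃F4 ^ 2 * y₄F4 ∧
    (∑ a, pderiv a y₁F4 * pderiv a y₃F4)
      = 192 * y₂F4 ^ 2 + 120 * y₂F4 * y₃F4 * y₄F4 - 12 * y₁F4 * y₄F4 ^ 2
        + 12 * y₃F4 ^ 2 * y₄F4 ^ 2 ∧
    (∑ a, pderiv a y₂F4 * pderiv a y₃F4)
      = 2 * y₁F4 - 6 * y₃F4 ^ 2 - 8 * y₂F4 * y₄F4 ^ 2 ∧
    (∑ a, pderiv a y₃F4 * pderiv a y₃F4) = 20 * y₂F4 * y₄F4 - 4 * y₃F4 * y₄F4 ^ 2 ∧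
    (∑ a, pderiv a y₁F4 * pderiv a y₄F4) = 24 * y₁F4 ∧
    (∑ a, pderiv a y₂F4 * pderiv a y₄F4) = 16 * y₂F4 ∧
    (∑ a, pderiv a y₃F4 * pderiv a y₄F4) = 12 * y₃F4 ∧
    (∑ a, pderiv a y₄F4 * pderiv a y₄F4) = 4 * y₄F4 := by
  exact ⟨g11, g12, g22, g13, g23, g33, g14, g24, g34, g44⟩
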